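/- For a unitary U and tangent vector ξ satisfying ξ†U + U†ξ = 0, the polar retraction Retr_U(ξ) = (U + ξ)((U + ξ)†(U + ξ))^{−1/2} satisfies ‖Retr_U(ξ) − (U + ξ)‖_F ≤ (1/2)‖ξ‖_F². -/

import Mathlib

open Matrix BigOperators
open scoped ComplexOrder

noncomputable section

/-- Frobenius norm. -/
def frob {D : ℕ} (A : Matrix (Fin D) (Fin D) ℂ) : ℝ :=
  Real.sqrt (∑ i, ∑ j, Complex.normSq (A i j))

/-- The positive-semidefinite square root, as `Matrix.PosSemidef.sqrt` was defined in the older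
Mathlib (removed since). -/
def posSemidefSqrt {n : Type*} [Fintype n] [DecidableEq n] {A : Matrix n n ℂ}
    (hA : A.IsHermitian) : Matrix n n ℂ :=
  hA.eigenvectorUnitary.1 * diagonal ((↑) ∘ (Real.sqrt ·) ∘ hA.eigenvalues) *
    (star hA.eigenvectorUnitary : Matrix n n ℂ)

/-- Polar retraction `Retr_U(ξ) = (U + ξ)((U + ξ)†(U + ξ))^{−1/2}`, using the
positive-semidefinite square root of `(U+ξ)†(U+ξ)`. -/
def polarRetr {D : ℕ} (U ξ : Matrix (Fin D) (Fin D) ℂ) : Matrix (Fin D) (Fin D) ℂ :=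
  (U + ξ) * (posSemidefSqrt (Matrix.posSemidef_conjTranspose_mul_self (U + ξ)).1)⁻¹

lemma frob_eq {D : ℕ} (A : Matrix (Fin D) (Fin D) ℂ) :
    frob A = Real.sqrt ((Matrix.trace (Aᴴ * A)).re) := by
  unfold frob
  congr 1
  rw [Matrix.trace, Complex.re_sum, Finset.sum_comm]
  refine Finset.sum_congr rfl fun j _ => ?_
  simp only [Matrix.diag_apply, Matrix.mul_apply, Matrix.conjTranspose_apply, Complex.re_sum]
  refine Finset.sum_congr rfl fun i _ => ?_
  rw [Complex.star_def, ← Complex.normSq_eq_conj_mul_self, Complex.ofReal_re]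

/-- second-order retraction bound
`‖Retr_U(ξ) − (U + ξ)‖_F ≤ (1/2)‖ξ‖_F²`. -/
theorem polar_retraction_bound (D : ℕ) (U ξ : Matrix (Fin D) (Fin D) ℂ)
    (hU : U ∈ Matrix.unitaryGroup (Fin D) ℂ)
    (hξ : ξᴴ * U + Uᴴ * ξ = 0) :
    frob (polarRetr U ξ - (U + ξ)) ≤ (1 / 2) * (frob ξ) ^ 2 := by
  classical
  have hUU : Uᴴ * U = 1 := by
    have := Matrix.mem_unitaryGroup_iff'.mp hU
    rwa [Matrix.star_eq_conjTranspose] at this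
  set A := U + ξ with hAdef
  have hBeq : Aᴴ * A = 1 + ξᴴ * ξ := by
    have : Aᴴ * A - (1 + ξᴴ * ξ) = ξᴴ * U + Uᴴ * ξ := by
      simp only [hAdef, conjTranspose_add, add_mul, mul_add, hUU]
      abel
    rw [hξ] at this
    exact sub_eq_zero.mp this
  set hB := Matrix.posSemidef_conjTranspose_mul_self A with hBdef
  set H : (Aᴴ * A).IsHermitian := hB.1 with hHdef
  set W : Matrix (Fin D) (Fin D) ℂ := (H.eigenvectorUnitary : Matrix (Fin D) (Fin D) ℂ) with hWdef
  set μ : Fin D → ℝ := H.eigenvalues with hμdef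
  have hW1 : Wᴴ * W = 1 := by
    have := Matrix.mem_unitaryGroup_iff'.mp H.eigenvectorUnitary.2
    rwa [Matrix.star_eq_conjTranspose] at this
  have hW2 : W * Wᴴ = 1 := by
    have := Matrix.mem_unitaryGroup_iff.mp H.eigenvectorUnitary.2
    rwa [Matrix.star_eq_conjTranspose] at this
  have hspec : Aᴴ * A = W * Matrix.diagonal (fun i => (μ i : ℂ)) * Wᴴ := by
    have := H.spectral_theorem
    rwa [Unitary.conjStarAlgAut_apply, Matrix.star_eq_conjTranspose] at this
  -- helper: conjugation algebra
  have hconj : ∀ g₁ g₂ : Fin D → ℂ,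
      (W * Matrix.diagonal g₁ * Wᴴ) * (W * Matrix.diagonal g₂ * Wᴴ)
        = W * Matrix.diagonal (fun i => g₁ i * g₂ i) * Wᴴ := by
    intro g₁ g₂
    simp only [Matrix.mul_assoc]
    rw [← Matrix.mul_assoc Wᴴ W, hW1, Matrix.one_mul,
      ← Matrix.mul_assoc (Matrix.diagonal g₁), Matrix.diagonal_mul_diagonal]
  have htrace : ∀ g : Fin D → ℂ,
      Matrix.trace (W * Matrix.diagonal g * Wᴴ) = ∑ i, g i := by
    intro g
    rw [Matrix.trace_mul_cycle, hW1, Matrix.one_mul, Matrix.trace_diagonal]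
  have hone : W * Matrix.diagonal (fun _ : Fin D => (1 : ℂ)) * Wᴴ = 1 := by
    rw [show Matrix.diagonal (fun _ : Fin D => (1:ℂ)) = 1 from Matrix.diagonal_one,
      Matrix.mul_one, hW2]
  have hsub : ∀ g₁ g₂ : Fin D → ℂ,
      W * Matrix.diagonal g₁ * Wᴴ - W * Matrix.diagonal g₂ * Wᴴ
        = W * Matrix.diagonal (fun i => g₁ i - g₂ i) * Wᴴ := by
    intro g₁ g₂
    rw [show Matrix.diagonal (fun i => g₁ i - g₂ i)
        = Matrix.diagonal g₁ - Matrix.diagonal g₂ from Matrix.diagonal_sub g₁ g₂ ▸ rfl]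
    rw [Matrix.mul_sub, Matrix.sub_mul]
  -- eigenvalues ≥ 1
  have hμ1 : ∀ i, 1 ≤ μ i := by
    intro i
    have hP : (Wᴴ * (ξᴴ * ξ) * (Wᴴ)ᴴ).PosSemidef :=
      (Matrix.posSemidef_conjTranspose_mul_self ξ).mul_mul_conjTranspose_same Wᴴ
    have hdiag : Wᴴ * (ξᴴ * ξ) * (Wᴴ)ᴴ
        = Matrix.diagonal (fun i => (μ i : ℂ) - 1) := by
      have h1 : (ξᴴ * ξ) = Aᴴ * A - 1 := by rw [hBeq, add_sub_cancel_left]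
      rw [h1, hspec, conjTranspose_conjTranspose]
      rw [Matrix.mul_sub, Matrix.sub_mul, Matrix.mul_one, hW1]
      rw [← Matrix.mul_assoc, ← Matrix.mul_assoc, hW1, Matrix.one_mul, Matrix.mul_assoc,
        hW1, Matrix.mul_one]
      rw [← Matrix.diagonal_one, Matrix.diagonal_sub]
    rw [hdiag] at hP
    have := Matrix.posSemidef_diagonal_iff.mp hP i
    rw [Complex.le_def] at this
    simpa using this.1
  have hμ0 : ∀ i, 0 ≤ μ i := fun i => le_trans zero_le_one (hμ1 i)
  have hμpos : ∀ i, 0 < Real.sqrt (μ i) := fun i =>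
    Real.sqrt_pos.mpr (lt_of_lt_of_le one_pos (hμ1 i))
  -- sqrt and its inverse
  have hSdef : posSemidefSqrt hB.1 = W * Matrix.diagonal (fun i => (Real.sqrt (μ i) : ℂ)) * Wᴴ := by
    rw [posSemidefSqrt, Matrix.star_eq_conjTranspose]
    rfl
  set T : Matrix (Fin D) (Fin D) ℂ :=
    W * Matrix.diagonal (fun i => ((Real.sqrt (μ i))⁻¹ : ℂ)) * Wᴴ with hTdef
  have hST : posSemidefSqrt hB.1 * T = 1 := by
    rw [hSdef, hTdef, hconj]
    rw [show (fun i => (Real.sqrt (μ i) : ℂ) * ((Real.sqrt (μ i))⁻¹ : ℂ))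
        = fun _ : Fin D => (1 : ℂ) from funext fun i => by
          rw [← Complex.ofReal_inv, ← Complex.ofReal_mul, mul_inv_cancel₀ (hμpos i).ne']
          simp]
    exact hone
  have hSinv : (posSemidefSqrt hB.1)⁻¹ = T := Matrix.inv_eq_right_inv hST
  -- the difference matrix
  set f : Fin D → ℝ := fun i => (Real.sqrt (μ i))⁻¹ - 1 with hfdef
  have hdiff : polarRetr U ξ - A = A * (W * Matrix.diagonal (fun i => (f i : ℂ)) * Wᴴ) := by
    show A * (posSemidefSqrt hB.1)⁻¹ - A = _
    rw [hSinv, hTdef]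
    have h2 : W * Matrix.diagonal (fun i => (f i : ℂ)) * Wᴴ
        = W * Matrix.diagonal (fun i => ((Real.sqrt (μ i))⁻¹ : ℂ)) * Wᴴ - 1 := by
      rw [← hone, hsub]
      congr 1
      congr 1
      funext i
      simp [hfdef]
    rw [h2, Matrix.mul_sub, Matrix.mul_one]
  have hHerm : (W * Matrix.diagonal (fun i => (f i : ℂ)) * Wᴴ)ᴴ
      = W * Matrix.diagonal (fun i => (f i : ℂ)) * Wᴴ := by
    rw [Matrix.conjTranspose_mul, Matrix.conjTranspose_mul, Matrix.conjTranspose_conjTranspose,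
      Matrix.diagonal_conjTranspose]
    rw [show (star fun i => (f i : ℂ)) = fun i => (f i : ℂ) from funext fun i => by
      simp [Complex.conj_ofReal]]
    rw [Matrix.mul_assoc]
  have hMHM : (polarRetr U ξ - A)ᴴ * (polarRetr U ξ - A)
      = W * Matrix.diagonal (fun i => (f i : ℂ) * (μ i : ℂ) * (f i : ℂ)) * Wᴴ := by
    rw [hdiff, Matrix.conjTranspose_mul, hHerm]
    have h3 : (W * Matrix.diagonal (fun i => (f i : ℂ)) * Wᴴ) * Aᴴ
        * (A * (W * Matrix.diagonal (fun i => (f i : ℂ)) * Wᴴ))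
        = (W * Matrix.diagonal (fun i => (f i : ℂ)) * Wᴴ) * ((Aᴴ * A)
        * (W * Matrix.diagonal (fun i => (f i : ℂ)) * Wᴴ)) := by
      simp only [Matrix.mul_assoc]
    rw [h3, hspec, hconj, hconj]
    refine congrArg (· * Wᴴ) (congrArg (W * ·) (congrArg Matrix.diagonal (funext fun i => ?_)))
    ring
  -- trace computations
  have htr1 : (Matrix.trace ((polarRetr U ξ - A)ᴴ * (polarRetr U ξ - A))).re
      = ∑ i, (1 - Real.sqrt (μ i)) ^ 2 := by
    rw [hMHM, htrace, Complex.re_sum]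
    refine Finset.sum_congr rfl fun i _ => ?_
    rw [← Complex.ofReal_mul, ← Complex.ofReal_mul, Complex.ofReal_re]
    have hs := Real.sq_sqrt (hμ0 i)
    set s := Real.sqrt (μ i) with hsdef
    have hsne : s ≠ 0 := (hμpos i).ne'
    show (s⁻¹ - 1) * μ i * (s⁻¹ - 1) = (1 - s) ^ 2
    field_simp [hfdef]
    nlinarith [hs]
  have htrξ : (Matrix.trace (ξᴴ * ξ)).re = ∑ i, (μ i - 1) := by
    have h1 : ξᴴ * ξ = Aᴴ * A - 1 := by rw [hBeq, add_sub_cancel_left]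
    rw [h1, Matrix.trace_sub, Matrix.trace_one, hspec, htrace]
    rw [Complex.sub_re, Complex.re_sum]
    simp [Finset.sum_sub_distrib]
  have hfrobξ : frob ξ ^ 2 = ∑ i, (μ i - 1) := by
    rw [frob_eq, htrξ, Real.sq_sqrt]
    exact Finset.sum_nonneg fun i _ => by linarith [hμ1 i]
  -- final estimate
  rw [frob_eq, htr1, hfrobξ]
  have step1 : ∑ i, (1 - Real.sqrt (μ i)) ^ 2 ≤ ∑ i, ((μ i - 1) / 2) ^ 2 := by
    refine Finset.sum_le_sum fun i _ => ?_
    have hs := Real.sq_sqrt (hμ0 i)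
    have h1 : 1 ≤ Real.sqrt (μ i) := by
      rw [show (1:ℝ) = Real.sqrt 1 from (Real.sqrt_one).symm]
      exact Real.sqrt_le_sqrt (hμ1 i)
    nlinarith [hs, h1]
  have step2 : ∑ i, ((μ i - 1) / 2) ^ 2 ≤ (∑ i, (μ i - 1) / 2) ^ 2 :=
    Finset.sum_sq_le_sq_sum_of_nonneg fun i _ => by linarith [hμ1 i]
  calc Real.sqrt (∑ i, (1 - Real.sqrt (μ i)) ^ 2)
      ≤ Real.sqrt ((∑ i, (μ i - 1) / 2) ^ 2) :=
        Real.sqrt_le_sqrt (le_trans step1 step2)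
    _ = ∑ i, (μ i - 1) / 2 := Real.sqrt_sq (Finset.sum_nonneg fun i _ => by linarith [hμ1 i])
    _ = 1 / 2 * ∑ i, (μ i - 1) := by rw [Finset.mul_sum]; exact Finset.sum_congr rfl fun i _ => by ring
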